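/- Let M and M' be isomorphic Puiseux monoids, and let P and P' be the prime supports of M\{0} and M'\{0} respectively. Then the symmetric difference P Δ P' is finite. -/
import Mathlib


/-- `a` is an atom of the Puiseux monoid `M`. -/
def IsAtomIn (M : AddSubmonoid ℚ) (a : ℚ) : Prop :=
  a ∈ M ∧ a ≠ 0 ∧ ∀ x ∈ M, ∀ y ∈ M, a = x + y → x = 0 ∨ y = 0

/-- `b` is atomic in `M`: it is `0` or a sum of atoms of `M`. -/
def AtomicIn (M : AddSubmonoid ℚ) (b : ℚ) : Prop :=
  b ∈ AddSubmonoid.closure {a | IsAtomIn M a}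

/-- `x` divides `y` in `M`. -/
def DvdIn (M : AddSubmonoid ℚ) (x y : ℚ) : Prop := y - x ∈ M

def QuasiFurstenberg (M : AddSubmonoid ℚ) : Prop :=
  ∀ b ∈ M, b ≠ 0 → ∃ c ∈ M, ∃ a, IsAtomIn M a ∧ DvdIn M a (b + c) ∧ ¬ DvdIn M a c

def QuasiAtomic (M : AddSubmonoid ℚ) : Prop :=
  ∀ b ∈ M, ∃ c ∈ M, AtomicIn M (b + c)

def AlmostFurstenberg (M : AddSubmonoid ℚ) : Prop :=
  ∀ b ∈ M, b ≠ 0 →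
    ∃ c, AtomicIn M c ∧ ∃ a, IsAtomIn M a ∧ DvdIn M a (b + c) ∧ ¬ DvdIn M a c

def NearlyFurstenberg (M : AddSubmonoid ℚ) : Prop :=
  ∃ c ∈ M, ∀ b ∈ M, b ≠ 0 → ∃ a, IsAtomIn M a ∧ DvdIn M a (b + c) ∧ ¬ DvdIn M a c

def Furstenberg (M : AddSubmonoid ℚ) : Prop :=
  ∀ b ∈ M, b ≠ 0 → ∃ a, IsAtomIn M a ∧ DvdIn M a b

def Antimatter (M : AddSubmonoid ℚ) : Prop := ∀ a, ¬ IsAtomIn M a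

def AtomicMonoid (M : AddSubmonoid ℚ) : Prop := ∀ b ∈ M, AtomicIn M b

def NearlyAtomic (M : AddSubmonoid ℚ) : Prop :=
  ∃ c ∈ M, ∀ b ∈ M, b ≠ 0 → AtomicIn M (b + c)

def AlmostAtomic (M : AddSubmonoid ℚ) : Prop :=
  ∀ b ∈ M, ∃ c, AtomicIn M c ∧ AtomicIn M (b + c)

lemma key_lin (M M' : AddSubmonoid ℚ) (hM : ∀ x ∈ M, 0 ≤ x)
    (φ : M ≃+ M') (x₀ : ℚ) (hx₀ : x₀ ∈ M) (hx0 : x₀ ≠ 0) :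
    ∃ r : ℚ, r ≠ 0 ∧ ∀ q, ∀ hq : q ∈ M, (φ ⟨q, hq⟩ : ℚ) = r * q := by
  have hφ0 : ∀ q (hq : q ∈ M), q ≠ 0 → (φ ⟨q, hq⟩ : ℚ) ≠ 0 := by
    intro q hq hqne h
    apply hqne
    have h1 : φ ⟨q, hq⟩ = 0 := Subtype.ext (by simpa using h)
    simpa using congrArg Subtype.val (φ.injective (h1.trans (map_zero φ).symm))
  set y₀ : ℚ := (φ ⟨x₀, hx₀⟩ : ℚ) with hy₀
  have hy0 : y₀ ≠ 0 := hφ0 x₀ hx₀ hx0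
  refine ⟨y₀ / x₀, div_ne_zero hy0 hx0, ?_⟩
  intro q hq
  rcases eq_or_ne q 0 with rfl | hqne
  · have : (⟨(0:ℚ), hq⟩ : M) = 0 := rfl
    rw [this, map_zero]; simp
  have hqpos : 0 < q := lt_of_le_of_ne (hM q hq) (Ne.symm hqne)
  have hx₀pos : 0 < x₀ := lt_of_le_of_ne (hM x₀ hx₀) (Ne.symm hx0)
  set a : ℕ := x₀.num.natAbs * q.den with ha
  set b : ℕ := q.num.natAbs * x₀.den with hb
  have h1 : (x₀.num.natAbs : ℚ) = (x₀.num : ℚ) := by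
    rw [Nat.cast_natAbs]
    exact_mod_cast abs_of_pos (Rat.num_pos.mpr hx₀pos)
  have h2 : (q.num.natAbs : ℚ) = (q.num : ℚ) := by
    rw [Nat.cast_natAbs]
    exact_mod_cast abs_of_pos (Rat.num_pos.mpr hqpos)
  have hax : (a : ℚ) * q = (b : ℚ) * x₀ := by
    push_cast [ha, hb, h1, h2]
    rw [mul_assoc, Rat.den_mul_eq_num, mul_assoc, Rat.den_mul_eq_num, mul_comm]
  have ha0 : (a : ℚ) ≠ 0 := by
    have : a ≠ 0 := by
      simp [ha, Nat.mul_ne_zero_iff, Int.natAbs_ne_zero, Rat.num_ne_zero.mpr hx0, q.den_nz]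
    exact_mod_cast this
  have hsub : a • (⟨q, hq⟩ : M) = b • (⟨x₀, hx₀⟩ : M) := by
    apply Subtype.ext
    push_cast
    simpa [nsmul_eq_mul] using hax
  have key := congrArg (fun z => ((φ z : M') : ℚ)) hsub
  simp only [map_nsmul] at key
  push_cast at key
  simp only [nsmul_eq_mul] at key
  -- key : a * φ⟨q⟩ = b * y₀
  have : (a : ℚ) * (φ ⟨q, hq⟩ : ℚ) = (a : ℚ) * (y₀ / x₀ * q) := by
    rw [key]
    field_simp
    rw [mul_comm ((b:ℚ)) y₀, mul_assoc, ← hax]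
    ring
  exact mul_left_cancel₀ ha0 this

/-- The prime support of the set of nonzero elements of `M`. -/
def PrimeSupport (M : AddSubmonoid ℚ) : Set ℕ :=
  {p | p.Prime ∧ ∃ q ∈ M, q ≠ 0 ∧ p ∣ q.den}

/-- Isomorphic Puiseux monoids have prime supports with finite symmetric
difference. -/
lemma support_diff_sub (M M' : AddSubmonoid ℚ) (r : ℚ) (hr : r ≠ 0)
    (hmem : ∀ q ∈ M, q ≠ 0 → r * q ∈ M') :
    PrimeSupport M \ PrimeSupport M' ⊆ {p | p ∣ r⁻¹.den} := by
  rintro p ⟨⟨hp, q, hqM, hq0, hpd⟩, hnot⟩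
  have hq' : r * q ∈ M' := hmem q hqM hq0
  have hq'0 : r * q ≠ 0 := mul_ne_zero hr hq0
  have hnd : ¬ p ∣ (r * q).den := fun hd => hnot ⟨hp, r * q, hq', hq'0, hd⟩
  have hqeq : q = r⁻¹ * (r * q) := by field_simp
  have hdvd : q.den ∣ r⁻¹.den * (r * q).den := by
    have h := Rat.mul_den_dvd r⁻¹ (r * q)
    rwa [← hqeq] at h
  rcases hp.dvd_mul.mp (hpd.trans hdvd) with h | h
  · exact h
  · exact absurd h hnd

lemma dvd_finite (n : ℕ) (hn : n ≠ 0) : {p : ℕ | p ∣ n}.Finite :=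
  (Set.finite_Iic n).subset fun p hp => Nat.le_of_dvd (Nat.pos_of_ne_zero hn) hp

theorem stmt_1 (M M' : AddSubmonoid ℚ)
    (hM : ∀ x ∈ M, 0 ≤ x) (hM' : ∀ x ∈ M', 0 ≤ x)
    (hiso : Nonempty (M ≃+ M')) :
    ((PrimeSupport M \ PrimeSupport M') ∪ (PrimeSupport M' \ PrimeSupport M)).Finite := by
  obtain ⟨φ⟩ := hiso
  have hφ0 : ∀ q (hq : q ∈ M), q ≠ 0 → (φ ⟨q, hq⟩ : ℚ) ≠ 0 := by
    intro q hq hqne h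
    apply hqne
    have h1 : φ ⟨q, hq⟩ = 0 := Subtype.ext (by simpa using h)
    simpa using congrArg Subtype.val (φ.injective (h1.trans (map_zero φ).symm))
  by_cases htriv : ∃ x ∈ M, x ≠ 0
  · obtain ⟨x₀, hx₀, hx0⟩ := htriv
    obtain ⟨r, hr, hrq⟩ := key_lin M M' hM φ x₀ hx₀ hx0
    have hy₀ : (φ ⟨x₀, hx₀⟩ : ℚ) ∈ M' := (φ ⟨x₀, hx₀⟩).2
    obtain ⟨s, hs, hsq⟩ := key_lin M' M hM' φ.symm (φ ⟨x₀, hx₀⟩ : ℚ) hy₀ (hφ0 x₀ hx₀ hx0)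
    have h1 : PrimeSupport M \ PrimeSupport M' ⊆ {p | p ∣ r⁻¹.den} := by
      apply support_diff_sub M M' r hr
      intro q hq hq0
      rw [← hrq q hq]; exact (φ ⟨q, hq⟩).2
    have h2 : PrimeSupport M' \ PrimeSupport M ⊆ {p | p ∣ s⁻¹.den} := by
      apply support_diff_sub M' M s hs
      intro q hq hq0
      rw [← hsq q hq]; exact (φ.symm ⟨q, hq⟩).2
    exact ((dvd_finite _ r⁻¹.den_nz).subset h1).union ((dvd_finite _ s⁻¹.den_nz).subset h2)
  · push_neg at htriv
    have hsup : PrimeSupport M = ∅ := by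
      ext p; simp only [PrimeSupport, Set.mem_setOf_eq, Set.mem_empty_iff_false, iff_false]
      rintro ⟨-, q, hq, hq0, -⟩; exact hq0 (htriv q hq)
    have hsup' : PrimeSupport M' = ∅ := by
      ext p; simp only [PrimeSupport, Set.mem_setOf_eq, Set.mem_empty_iff_false, iff_false]
      rintro ⟨-, q, hq, hq0, -⟩
      have hx : (φ.symm ⟨q, hq⟩ : ℚ) ∈ M := (φ.symm ⟨q, hq⟩).2
      have hx0 : (φ.symm ⟨q, hq⟩ : ℚ) ≠ 0 := by
        intro h
        apply hq0
        have h1 : φ.symm ⟨q, hq⟩ = 0 := Subtype.ext (by simpa using h)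
        simpa using congrArg Subtype.val (φ.symm.injective (h1.trans (map_zero φ.symm).symm))
      exact hx0 (htriv _ hx)
    rw [hsup, hsup']; simp
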